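/- arXiv:2604.14763 — 2 statements merged into one kernel-verified Lean document; each statement's English description precedes it below -/
import Mathlib

section
/- Let G be a claw-free split graph with vertex set partitioned into a maximum clique K and an independent set I. Then G is Hamiltonian if and only if G is 2-connected. -/
open SimpleGraph

/-- `G` is `K_{1,r}`-free: no vertex has `r` pairwise nonadjacent neighbors. -/
def K1rFree {V : Type*} (G : SimpleGraph V) (r : ℕ) : Prop :=
  ¬ ∃ (v : V) (s : Finset V), s.card = r ∧ (∀ u ∈ s, G.Adj v u) ∧
      (s : Set V).Pairwise fun a b => ¬ G.Adj a b

/-- `(K, I)` is a partition of the vertex set of `G` into a clique `K`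
and an independent set `I`. -/
def IsSplitPartition {V : Type*} (G : SimpleGraph V) (K I : Set V) : Prop :=
  K ∪ I = Set.univ ∧ Disjoint K I ∧ G.IsClique K ∧ I.Pairwise fun a b => ¬ G.Adj a b

/-- `G` is a split graph of type `(K, I)`: moreover `K` is a maximum clique. -/
def IsSplitType {V : Type*} [Fintype V] (G : SimpleGraph V) (K I : Finset V) : Prop :=
  IsSplitPartition G ↑K ↑I ∧ ∀ s : Finset V, G.IsClique (s : Set V) → s.card ≤ K.card

/-- `G` contains a cycle through all its vertices. -/
def IsHamiltonianGraph {V : Type*} [DecidableEq V] (G : SimpleGraph V) : Prop :=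
  ∃ (v : V) (c : G.Walk v v), c.IsHamiltonianCycle

/-- `G` has more than `k` vertices and remains connected after deleting
any fewer than `k` vertices. -/
def KConnected {V : Type*} [Fintype V] (G : SimpleGraph V) (k : ℕ) : Prop :=
  k < Fintype.card V ∧ ∀ S : Set V, S.ncard < k → (G.induce Sᶜ).Connected

/-- every vertex lies on a triangle, and every non-Hamiltonian cycle can be
extended to a cycle on one more vertex containing all its vertices. -/
def FullyCycleExtendable {V : Type*} [DecidableEq V] (G : SimpleGraph V) : Prop :=
  (∀ v : V, ∃ c : G.Walk v v, c.IsCycle ∧ c.length = 3) ∧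
  ∀ (v : V) (c : G.Walk v v), c.IsCycle → ¬ (∀ u : V, u ∈ c.support) →
    ∃ (w : V) (c' : G.Walk w w), c'.IsCycle ∧
      c.support.toFinset ⊆ c'.support.toFinset ∧
      c'.support.toFinset.card = c.support.toFinset.card + 1

/-- between any two distinct vertices there is a Hamiltonian path. -/
def HamiltonConnected {V : Type*} [DecidableEq V] (G : SimpleGraph V) : Prop :=
  ∀ u v : V, u ≠ v → ∃ p : G.Walk u v, p.IsHamiltonian

/-- the largest real eigenvalue of a real square matrix. -/
noncomputable def specRad {V : Type*} [Fintype V] (A : Matrix V V ℝ) : ℝ :=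
  sSup {μ : ℝ | Module.End.HasEigenvalue A.mulVecLin μ}

open Classical in
/-- the real adjacency matrix of `G`. -/
noncomputable def adjMat {V : Type*} [Fintype V] (G : SimpleGraph V) : Matrix V V ℝ :=
  Matrix.of fun i j => if G.Adj i j then 1 else 0

/-- the spectral radius of a graph: the largest eigenvalue of its adjacency matrix. -/
noncomputable def rho {V : Type*} [Fintype V] (G : SimpleGraph V) : ℝ :=
  specRad (adjMat G)

/-- `x` is the Perron vector of `G` : a unit positive eigenvector of the
adjacency matrix for the eigenvalue `rho G`. -/
def IsPerronVector {V : Type*} [Fintype V] (G : SimpleGraph V) (x : V → ℝ) : Prop :=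
  (∀ v, 0 < x v) ∧ (∑ v, x v ^ 2 = 1) ∧ (adjMat G).mulVec x = rho G • x





namespace HamAux

variable {V : Type*} {G : SimpleGraph V}

/-- Build a walk from `x` to `b` through the list `l`. -/
def buildWalk (G : SimpleGraph V) : (x b : V) → (l : List V) →
    List.Chain G.Adj x (l ++ [b]) → G.Walk x b
  | _, _, [], h => Walk.cons (List.chain_cons.1 h).1 Walk.nil
  | _, b, c :: l, h => Walk.cons (List.chain_cons.1 h).1
      (buildWalk G c b l (List.chain_cons.1 h).2)

lemma support_buildWalk : ∀ (x b : V) (l : List V) (h : List.Chain G.Adj x (l ++ [b])),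
    (buildWalk G x b l h).support = x :: (l ++ [b])
  | _, _, [], _ => rfl
  | x, b, c :: l, h => by
    simp only [buildWalk, Walk.support_cons, support_buildWalk c b l, List.cons_append]
    erw [support_buildWalk c b l]

lemma chain_append_of {R : V → V → Prop} :
    ∀ {a b : V} (l : List V), List.Chain R a l → R ((a :: l).getLast (by simp)) b →
      List.Chain R a (l ++ [b])
  | _, _, [], _, h2 => List.chain_cons.2 ⟨h2, List.Chain.nil⟩
  | a, b, c :: l, h1, h2 => by
    rw [List.Chain, List.chain_cons] at h1
    exact List.chain_cons.2 ⟨h1.1, chain_append_of l h1.2 (by simpa using h2)⟩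

lemma isHamiltonianGraph_of_list [DecidableEq V]
    (L : List V) (hnd : L.Nodup) (hlen : 3 ≤ L.length) (hchain : L.Chain' G.Adj)
    (hne : L ≠ []) (hclose : G.Adj (L.getLast hne) (L.head hne)) (hmem : ∀ v, v ∈ L) :
    IsHamiltonianGraph G := by
  match L, hnd, hchain, hne, hclose, hmem with
  | x :: c :: c' :: l, hnd, hchain, hne, hclose, hmem =>
  have hch : List.Chain G.Adj x (c :: c' :: l) := hchain
  have hfull : List.Chain G.Adj x ((c :: c' :: l) ++ [x]) :=
    chain_append_of _ hch (by simpa using hclose)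
  refine ⟨x, buildWalk G x x (c :: c' :: l) hfull, ?_⟩
  have hx : x ∉ c :: c' :: l := (List.nodup_cons.1 hnd).1
  have hnd1 : (c :: c' :: l).Nodup := (List.nodup_cons.1 hnd).2
  have hc : c ∉ c' :: l := (List.nodup_cons.1 hnd1).1
  simp only [List.mem_cons, not_or] at hx hc
  obtain ⟨hxc, hxc', hxl⟩ := hx
  obtain ⟨hcc', hcl⟩ := hc
  have hndtail : ((c :: c' :: l) ++ [x]).Nodup :=
    ((List.perm_append_singleton x (c :: c' :: l)).nodup_iff).2 hnd
  rw [Walk.isHamiltonianCycle_iff_isCycle_and_support_count_tail_eq_one]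
  have hsupq : (buildWalk G c x (c' :: l) (List.chain_cons.1 hfull).2).support
      = c :: ((c' :: l) ++ [x]) := support_buildWalk _ _ _ _
  constructor
  · show (Walk.cons _ (buildWalk G c x (c' :: l) _)).IsCycle
    rw [Walk.cons_isCycle_iff]
    refine ⟨?_, ?_⟩
    · rw [Walk.isPath_def, hsupq]
      exact hndtail
    · show s(x, c) ∉ (Walk.cons _ (buildWalk G c' x l _)).edges
      rw [Walk.edges_cons, List.mem_cons]
      push_neg
      refine ⟨fun h => ?_, fun h => ?_⟩
      · rw [Sym2.eq_iff] at h
        rcases h with ⟨h1, _⟩ | ⟨h1, h2⟩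
        · exact hxc h1
        · exact hxc' h1
      · have hcmem := Walk.snd_mem_support_of_mem_edges _ h
        erw [support_buildWalk] at hcmem
        have hcx : ¬ c = x := fun e => hxc e.symm
        simp at hcmem
        tauto
  · intro a
    rw [support_buildWalk, List.tail_cons]
    rw [List.count_eq_one_of_mem hndtail]
    have ha := hmem a
    rw [List.mem_cons] at ha
    rcases ha with h | h
    · simp [h]
    · exact List.mem_append_left _ h



lemma reachable_induce_of_walk {s : Set V} :
    ∀ {x y : V} (p : G.Walk x y) (hx : x ∈ s) (hy : y ∈ s),
      (∀ z ∈ p.support, z ∈ s) → (G.induce s).Reachable ⟨x, hx⟩ ⟨y, hy⟩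
  | x, _, Walk.nil, hx, hy, _ => Reachable.refl _
  | x, y, Walk.cons (v := w) h q, hx, hy, hp => by
    have hw : w ∈ s := hp w (by simp)
    have hadj : (G.induce s).Adj ⟨x, hx⟩ ⟨w, hw⟩ := h
    exact hadj.reachable.trans
      (reachable_induce_of_walk q hw hy fun z hz => hp z (by simp [hz]))

lemma exists_walk_avoid [DecidableEq V] {a : V} {c : G.Walk a a}
    (hc : c.IsHamiltonianCycle) {x y v : V} (hxy : x ≠ y) (hvx : v ≠ x) (hvy : v ≠ y) :
    ∃ p : G.Walk x y, v ∉ p.support := by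
  have hxmem : x ∈ c.support := hc.mem_support x
  set d : G.Walk x x := c.rotate x hxmem with hd
  have hrot : List.Perm d.support.tail c.support.tail := (c.support_rotate x hxmem).perm
  have hcount : ∀ z : V, c.support.tail.count z = 1 := by
    intro z
    have := hc.isHamiltonian_tail z
    rwa [Walk.support_tail_of_not_nil c hc.isCycle.not_nil] at this
  have hdcount : ∀ z : V, d.support.tail.count z = 1 := fun z => by
    rw [hrot.count_eq]; exact hcount z
  have hymem : y ∈ d.support.tail := by
    rw [← List.count_pos_iff, hdcount y]; norm_num
  have hymem' : y ∈ d.support := List.mem_of_mem_tail hymem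
  have hspec := d.take_spec hymem'
  have hsup : d.support = (d.takeUntil y hymem').support ++ (d.dropUntil y hymem').support.tail := by
    conv_lhs => rw [← hspec]
    exact Walk.support_append _ _
  have hveq : d.support.tail.count v = 1 := hdcount v
  have hvd : d.support.count v = 1 := by
    rw [Walk.support_eq_cons, List.count_cons_of_ne hvx.symm]
    exact hveq
  rw [hsup, List.count_append] at hvd
  rcases Nat.eq_zero_or_pos ((d.takeUntil y hymem').support.count v) with h0 | hpos
  · exact ⟨d.takeUntil y hymem', by rwa [← List.count_eq_zero]⟩
  · have h0 : (d.dropUntil y hymem').support.tail.count v = 0 := by omega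
    refine ⟨(d.dropUntil y hymem').reverse, ?_⟩
    rw [Walk.support_reverse, List.mem_reverse]
    rw [Walk.support_eq_cons]
    rw [List.mem_cons]
    push_neg
    exact ⟨hvy, by rwa [← List.count_eq_zero]⟩

lemma two_connected_of_hamiltonian [Fintype V] [DecidableEq V]
    (h : ∃ (v : V) (c : G.Walk v v), c.IsHamiltonianCycle) :
    2 < Fintype.card V ∧ ∀ S : Set V, S.ncard < 2 → (G.induce Sᶜ).Connected := by
  obtain ⟨a, c, hc⟩ := h
  have hcard : 2 < Fintype.card V := by
    have h3 := hc.isCycle.three_le_length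
    have := hc.length_eq
    omega
  refine ⟨hcard, fun S hS => ?_⟩
  have hSone : S = ∅ ∨ ∃ v, S = {v} := by
    have : S.ncard ≤ 1 := by omega
    rcases (Set.ncard_le_one_iff_eq (Set.toFinite S)).1 this with h | ⟨v, h⟩
    · exact Or.inl h
    · exact Or.inr ⟨v, h⟩
  have hne : ∀ x y : V, ∃ v : V, v ≠ x ∧ v ≠ y := by
    intro x y
    by_contra hcon
    push_neg at hcon
    have hsub : (Finset.univ : Finset V) ⊆ {x, y} := by
      intro z _
      rcases eq_or_ne z x with rfl | hz
      · simp
      · simp [hcon z hz]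
    have := Finset.card_le_card hsub
    have h2 : ({x, y} : Finset V).card ≤ 2 := Finset.card_insert_le _ _ |>.trans (by simp)
    simp [Finset.card_univ] at this
    omega
  haveI hne' : Nonempty ↑Sᶜ := by
    obtain ⟨v, hsub⟩ : ∃ v : V, S ⊆ {v} := by
      rcases hSone with rfl | ⟨v, rfl⟩
      · exact ⟨a, by simp⟩
      · exact ⟨v, subset_refl _⟩
    obtain ⟨w, hw, _⟩ := hne v v
    exact ⟨⟨w, fun hwS => hw (by simpa using hsub hwS)⟩⟩
  constructor
  rintro ⟨x, hx⟩ ⟨y, hy⟩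
  rcases eq_or_ne x y with rfl | hxy
  · rfl
  obtain ⟨v, hsub, hvx, hvy⟩ : ∃ v : V, S ⊆ {v} ∧ v ≠ x ∧ v ≠ y := by
    rcases hSone with rfl | ⟨v, rfl⟩
    · obtain ⟨v, h1, h2⟩ := hne x y
      exact ⟨v, by simp, h1, h2⟩
    · refine ⟨v, subset_refl _, ?_, ?_⟩
      · intro hvx; apply hx; rw [← hvx]; exact rfl
      · intro hvy; apply hy; rw [← hvy]; exact rfl
  obtain ⟨p, hp⟩ := exists_walk_avoid hc hxy hvx hvy
  exact reachable_induce_of_walk p hx hy fun z hz => by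
    intro hzS
    have := hsub hzS
    simp at this
    exact hp (this ▸ hz)



lemma chain'_of_clique {Kset : Set V} (hcliq : G.IsClique Kset) (l : List V)
    (hnd : l.Nodup) (hmem : ∀ x ∈ l, x ∈ Kset) : l.Chain' G.Adj :=
  List.Pairwise.isChain
    (List.Pairwise.imp_of_mem (fun ha hb hne => hcliq (hmem _ ha) (hmem _ hb) hne) hnd)

lemma head_ne_getLast (l : List V) (hnd : l.Nodup) (h2 : 2 ≤ l.length) (hne : l ≠ []) :
    l.head hne ≠ l.getLast hne := by
  match l, h2 with
  | a :: b :: l, _ =>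
    have : (a :: b :: l).getLast (by simp) = (b :: l).getLast (by simp) :=
      List.getLast_cons (by simp)
    rw [List.head_cons, this]
    intro h
    exact (List.nodup_cons.1 hnd).1 (h ▸ List.getLast_mem (l := b :: l) (by simp))

lemma chain'_append' {R : V → V → Prop} {l₁ l₂ : List V} (h₁ : List.Chain' R l₁)
    (h₂ : List.Chain' R l₂)
    (h : ∀ (hx : l₁ ≠ []) (hy : l₂ ≠ []), R (l₁.getLast hx) (l₂.head hy)) :
    List.Chain' R (l₁ ++ l₂) := by
  refine List.isChain_append.2 ⟨h₁, h₂, fun x hx y hy => ?_⟩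
  have hne1 : l₁ ≠ [] := by rintro rfl; simp at hx
  have hne2 : l₂ ≠ [] := by rintro rfl; simp at hy
  rw [List.getLast?_eq_getLast_of_ne_nil hne1] at hx
  rw [List.head?_eq_head hne2] at hy
  obtain rfl : x = l₁.getLast hne1 := by simpa using hx.symm
  obtain rfl : y = l₂.head hne2 := by simpa using hy.symm
  exact h hne1 hne2

lemma blocks_nodup (u v : V → V) (KP : V → Prop) :
    ∀ as : List V, as.Nodup →
      (∀ a ∈ as, u a ≠ v a ∧ KP (u a) ∧ KP (v a) ∧ ¬ KP a) →
      (∀ a ∈ as, ∀ b ∈ as, a ≠ b → u a ≠ u b ∧ u a ≠ v b ∧ v a ≠ u b ∧ v a ≠ v b) →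
      (as.flatMap fun a => [u a, a, v a]).Nodup
  | [], _, _, _ => by simp
  | a :: as, hnd, hprop, hdist => by
    rw [List.flatMap_cons]
    have hndas : as.Nodup := (List.nodup_cons.1 hnd).2
    have hna : a ∉ as := (List.nodup_cons.1 hnd).1
    have IH := blocks_nodup u v KP as hndas
      (fun b hb => hprop b (List.mem_cons_of_mem _ hb))
      (fun b hb c hc => hdist b (List.mem_cons_of_mem _ hb) c (List.mem_cons_of_mem _ hc))
    obtain ⟨huv, hKu, hKv, hKa⟩ := hprop a (List.mem_cons_self)
    have hmemB : ∀ x, x ∈ (as.flatMap fun a => [u a, a, v a]) →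
        ∃ b ∈ as, x = u b ∨ x = b ∨ x = v b := by
      intro x hx
      rw [List.mem_flatMap] at hx
      obtain ⟨b, hb, hxb⟩ := hx
      simp only [List.mem_cons, List.mem_singleton] at hxb
      exact ⟨b, hb, by tauto⟩
    have hane : ∀ b ∈ as, a ≠ b := fun b hb h => hna (h ▸ hb)
    simp only [List.cons_append, List.nil_append, List.nodup_cons]
    refine ⟨?_, ?_, ?_, IH⟩
    · -- u a ∉ a :: v a :: B
      simp only [List.mem_cons, not_or]
      refine ⟨fun h => hKa (h ▸ hKu), fun h => huv h, fun h => ?_⟩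
      obtain ⟨b, hb, hcase⟩ := hmemB _ h
      rcases hcase with h1 | h1 | h1
      · exact ((hdist a (List.mem_cons_self) b (List.mem_cons_of_mem _ hb) (hane b hb)).1 h1)
      · exact (hprop b (List.mem_cons_of_mem _ hb)).2.2.2 (h1 ▸ hKu)
      · exact ((hdist a (List.mem_cons_self) b (List.mem_cons_of_mem _ hb) (hane b hb)).2.1 h1)
    · -- a ∉ v a :: B
      simp only [List.mem_cons, not_or]
      refine ⟨fun h => hKa (h ▸ hKv), fun h => ?_⟩
      obtain ⟨b, hb, hcase⟩ := hmemB _ h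
      rcases hcase with h1 | h1 | h1
      · exact hKa (h1 ▸ (hprop b (List.mem_cons_of_mem _ hb)).2.1)
      · exact hna (h1 ▸ hb)
      · exact hKa (h1 ▸ (hprop b (List.mem_cons_of_mem _ hb)).2.2.1)
    · -- v a ∉ B
      intro h
      obtain ⟨b, hb, hcase⟩ := hmemB _ h
      rcases hcase with h1 | h1 | h1
      · exact ((hdist a (List.mem_cons_self) b (List.mem_cons_of_mem _ hb) (hane b hb)).2.2.1 h1)
      · exact (hprop b (List.mem_cons_of_mem _ hb)).2.2.2 (h1 ▸ hKv)
      · exact ((hdist a (List.mem_cons_self) b (List.mem_cons_of_mem _ hb) (hane b hb)).2.2.2 h1)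

lemma blocks_chain {Kset : Set V} (hcliq : G.IsClique Kset) (u v : V → V) :
    ∀ (as rest : List V),
      (∀ a ∈ as, G.Adj a (u a) ∧ G.Adj a (v a) ∧ u a ∈ Kset ∧ v a ∈ Kset) →
      (∀ x ∈ rest, x ∈ Kset) → rest.Chain' G.Adj →
      ((as.flatMap fun a => [u a, a, v a]) ++ rest).Nodup →
      List.Chain' G.Adj ((as.flatMap fun a => [u a, a, v a]) ++ rest) ∧
      (∀ x, ((as.flatMap fun a => [u a, a, v a]) ++ rest).head? = some x → x ∈ Kset) ∧
      (∀ x, ((as.flatMap fun a => [u a, a, v a]) ++ rest).getLast? = some x → x ∈ Kset)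
  | [], rest, _, hrK, hrc, _ => by
    simp only [List.flatMap_nil, List.nil_append]
    refine ⟨hrc, fun x hx => hrK x (List.mem_of_mem_head? hx), fun x hx => ?_⟩
    obtain ⟨h, rfl⟩ := List.mem_getLast?_eq_getLast hx
    exact hrK _ (List.getLast_mem h)
  | a :: as, rest, hblk, hrK, hrc, hnd => by
    rw [List.flatMap_cons] at hnd ⊢
    simp only [List.cons_append, List.nil_append] at hnd ⊢
    set rem := (as.flatMap fun a => [u a, a, v a]) ++ rest with hrem
    have hndrem : rem.Nodup :=
      (List.nodup_cons.1 (List.nodup_cons.1 (List.nodup_cons.1 hnd).2).2).2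
    have IH := blocks_chain hcliq u v as rest
      (fun b hb => hblk b (List.mem_cons_of_mem _ hb)) hrK hrc hndrem
    obtain ⟨hau, hav, hKu, hKv⟩ := hblk a (List.mem_cons_self)
    have hvrem : v a ∉ rem := by
      have := (List.nodup_cons.1 (List.nodup_cons.1 hnd).2).2
      exact (List.nodup_cons.1 this).1
    refine ⟨?_, ?_, ?_⟩
    · rw [List.Chain', List.isChain_cons_cons, List.isChain_cons_cons]
      refine ⟨hau.symm, hav, ?_⟩
      match hr : rem with
      | [] => simp
      | r :: rem' =>
        rw [List.isChain_cons_cons]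
        refine ⟨?_, by rw [hrem]; exact IH.1⟩
        have hrK' : r ∈ Kset := IH.2.1 r (by rw [← hrem]; rfl)
        have : v a ≠ r := by
          intro h; exact hvrem (h ▸ List.mem_cons_self)
        exact hcliq hKv hrK' this
    · intro x hx
      simp only [List.head?_cons, Option.some.injEq] at hx
      exact hx ▸ hKu
    · intro x hx
      match hr : rem with
      | [] =>
        simp only [List.getLast?_cons_cons, List.getLast?_singleton, Option.some.injEq] at hx
        first
        | exact hx ▸ hKv
        | exact hx.symm ▸ hKv
      | r :: rem' =>
        rw [List.getLast?_cons_cons, List.getLast?_cons_cons, List.getLast?_cons_cons] at hx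
        exact IH.2.2 x (by rw [← hrem]; exact hx)

lemma exists_ne_ne [Fintype V] (h : 2 < Fintype.card V) (x y : V) :
    ∃ z : V, z ≠ x ∧ z ≠ y := by
  classical
  by_contra hcon
  push_neg at hcon
  have hsub : (Finset.univ : Finset V) ⊆ {x, y} := by
    intro z _
    rcases eq_or_ne z x with rfl | hz
    · simp
    · simp [hcon z hz]
  have h1 := Finset.card_le_card hsub
  have h2 : ({x, y} : Finset V).card ≤ 2 := Finset.card_insert_le _ _ |>.trans (by simp)
  rw [Finset.card_univ] at h1
  omega

lemma length_eq_card [Fintype V] [DecidableEq V] {l : List V} (hnd : l.Nodup)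
    (hall : ∀ v, v ∈ l) : l.length = Fintype.card V := by
  have h1 : l.toFinset = Finset.univ := Finset.eq_univ_iff_forall.2 (by simp [hall])
  have h2 := List.toFinset_card_of_nodup hnd
  rw [h1, Finset.card_univ] at h2
  omega

end HamAux




theorem ham_of_conn_aux {V : Type*} [Fintype V] [DecidableEq V] (G : SimpleGraph V) (K I : Finset V)
    (hunion : (↑K ∪ ↑I : Set V) = Set.univ) (hdisj : Disjoint (↑K : Set V) (↑I : Set V))
    (hcliq : G.IsClique (↑K : Set V))
    (hind : (↑I : Set V).Pairwise fun a b => ¬ G.Adj a b)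
    (hmax : ∀ s : Finset V, G.IsClique (s : Set V) → s.card ≤ K.card)
    (hclaw : ¬ ∃ (v : V) (s : Finset V), s.card = 3 ∧ (∀ u ∈ s, G.Adj v u) ∧
      (s : Set V).Pairwise fun a b => ¬ G.Adj a b)
    (hcard3 : 2 < Fintype.card V)
    (hconn2 : ∀ S : Set V, S.ncard < 2 → (G.induce Sᶜ).Connected) :
    IsHamiltonianGraph G := by
  classical
  have hKI : ∀ x : V, x ∈ K ∨ x ∈ I := by
    intro x
    have hx : x ∈ (↑K ∪ ↑I : Set V) := by rw [hunion]; trivial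
    simpa using hx
  have hIK : ∀ a ∈ I, a ∉ K := by
    intro a ha hK
    exact Set.disjoint_left.mp hdisj (by exact_mod_cast hK) (by exact_mod_cast ha)
  have hInK : ∀ a ∈ I, ∀ x : V, G.Adj a x → x ∈ K := by
    intro a ha x hadj
    rcases hKI x with h | h
    · exact h
    · exact absurd hadj (hind (by exact_mod_cast ha) (by exact_mod_cast h) (G.ne_of_adj hadj))
  have claw1 : ∀ w x y z : V, x ∈ I → y ∈ I → z ∈ I → x ≠ y → x ≠ z → y ≠ z →
      G.Adj w x → G.Adj w y → G.Adj w z → False := by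
    intro w x y z hx hy hz hxy hxz hyz h1 h2 h3
    apply hclaw
    refine ⟨w, {x, y, z}, ?_, ?_, ?_⟩
    · rw [Finset.card_insert_of_notMem (by simp [hxy, hxz]),
        Finset.card_insert_of_notMem (by simp [hyz]), Finset.card_singleton]
    · intro t ht
      simp only [Finset.mem_insert, Finset.mem_singleton] at ht
      rcases ht with rfl | rfl | rfl <;> assumption
    · refine Set.Pairwise.mono ?_ hind
      intro t ht
      simp only [Finset.coe_insert, Finset.coe_singleton, Set.mem_insert_iff,
        Set.mem_singleton_iff] at ht
      rcases ht with rfl | rfl | rfl <;> simp [hx, hy, hz]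
  have claw2 : ∀ u ∈ K, ∀ x y : V, x ∈ I → y ∈ I → x ≠ y → G.Adj u x → G.Adj u y →
      ∀ w ∈ K, w ≠ u → G.Adj w x ∨ G.Adj w y := by
    intro u hu x y hx hy hxy hux huy w hw hwu
    by_contra hcon
    push_neg at hcon
    obtain ⟨h1, h2⟩ := hcon
    apply hclaw
    have hxw : x ≠ w := fun h => (hIK x hx) (h ▸ hw)
    have hyw : y ≠ w := fun h => (hIK y hy) (h ▸ hw)
    refine ⟨u, {x, y, w}, ?_, ?_, ?_⟩
    · rw [Finset.card_insert_of_notMem (by simp [hxy, hxw]),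
        Finset.card_insert_of_notMem (by simp [hyw]), Finset.card_singleton]
    · intro t ht
      simp only [Finset.mem_insert, Finset.mem_singleton] at ht
      rcases ht with rfl | rfl | rfl
      · exact hux
      · exact huy
      · exact hcliq (by exact_mod_cast hu) (by exact_mod_cast hw) (Ne.symm hwu)
    · intro s hs t ht hst
      simp only [Finset.coe_insert, Finset.coe_singleton, Set.mem_insert_iff,
        Set.mem_singleton_iff] at hs ht
      have hindxy : ¬ G.Adj x y :=
        hind (by exact_mod_cast hx) (by exact_mod_cast hy) hxy
      rcases hs with rfl | rfl | rfl <;> rcases ht with rfl | rfl | rfl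
      · exact absurd rfl hst
      · exact hindxy
      · exact fun h => h1 h.symm
      · exact fun h => hindxy h.symm
      · exact absurd rfl hst
      · exact fun h => h2 h.symm
      · exact h1
      · exact h2
      · exact absurd rfl hst
  have hdeg2 : ∀ a ∈ I, ∃ x y : V, x ≠ y ∧ G.Adj a x ∧ G.Adj a y := by
    intro a ha
    by_contra hcon
    push_neg at hcon
    set S : Set V := {x | G.Adj a x} with hSdef
    have hss : S.Subsingleton := by
      intro p hp q hq
      by_contra hne
      exact hcon p q hne hp hq
    obtain ⟨x0, hSx0⟩ : ∃ x0 : V, S ⊆ {x0} := by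
      rcases S.eq_empty_or_nonempty with h | ⟨z, hz⟩
      · exact ⟨a, by simp [h]⟩
      · exact ⟨z, fun w hw => by simp [hss hw hz]⟩
    have hS2 : S.ncard < 2 := by
      have := Set.ncard_le_ncard hSx0 (Set.finite_singleton x0)
      simp only [Set.ncard_singleton] at this
      omega
    have haS : a ∈ Sᶜ := by
      simp only [Set.mem_compl_iff, hSdef, Set.mem_setOf_eq]
      exact G.irrefl
    obtain ⟨b, hba, hbx0⟩ := HamAux.exists_ne_ne hcard3 a x0
    have hbS : b ∈ Sᶜ := fun hbS' => hbx0 (by simpa using hSx0 hbS')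
    obtain ⟨p⟩ := (hconn2 S hS2).preconnected ⟨a, haS⟩ ⟨b, hbS⟩
    have hnil : ¬p.Nil := Walk.not_nil_of_ne (fun h => hba (congrArg Subtype.val h).symm)
    obtain ⟨wv, hadj, q, hpe⟩ := Walk.not_nil_iff.1 hnil
    have hadj' : G.Adj a ↑wv := hadj
    exact wv.2 hadj'
  have hnonadj : ∀ a ∈ I, ∃ w ∈ K, ¬ G.Adj a w := by
    intro a ha
    by_contra hcon
    push_neg at hcon
    have hclq : G.IsClique (↑(insert a K) : Set V) := by
      rw [Finset.coe_insert]
      intro p hp q hq hpq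
      simp only [Set.mem_insert_iff, Finset.mem_coe] at hp hq
      rcases hp with rfl | hp <;> rcases hq with rfl | hq
      · exact absurd rfl hpq
      · exact hcon q hq
      · exact (hcon p hp).symm
      · exact hcliq (by exact_mod_cast hp) (by exact_mod_cast hq) hpq
    have := hmax _ hclq
    rw [Finset.card_insert_of_notMem (hIK a ha)] at this
    omega
  have hunionN : ∀ x y : V, x ∈ I → y ∈ I → x ≠ y → ∀ u : V, G.Adj x u → G.Adj y u →
      ∀ w ∈ K, G.Adj x w ∨ G.Adj y w := by
    intro x y hx hy hxy u hxu hyu w hw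
    have hu : u ∈ K := hInK x hx u hxu
    rcases eq_or_ne w u with rfl | hne
    · exact Or.inl hxu
    · rcases claw2 u hu x y hx hy hxy hxu.symm hyu.symm w hw hne with h | h
      · exact Or.inl h.symm
      · exact Or.inr h.symm
  by_cases hov : ∃ x ∈ I, ∃ y ∈ I, x ≠ y ∧ ∃ u : V, G.Adj x u ∧ G.Adj y u
  case neg =>
    push_neg at hov
    have hcommon : ∀ x ∈ I, ∀ y ∈ I, x ≠ y → ∀ u : V, G.Adj x u → ¬ G.Adj y u := hov
    choose! fu fv hfne hfu hfv using hdeg2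
    set as := I.toList with has
    have hasmem : ∀ a ∈ as, a ∈ I := fun a haa => by rwa [has, Finset.mem_toList] at haa
    set Bl := as.flatMap (fun a => [fu a, a, fv a]) with hBl
    have hBnd : Bl.Nodup := by
      apply HamAux.blocks_nodup fu fv (· ∈ K) as (Finset.nodup_toList I)
      · intro a haa
        have ha := hasmem a haa
        exact ⟨hfne a ha, hInK a ha _ (hfu a ha), hInK a ha _ (hfv a ha), hIK a ha⟩
      · intro a haa b hbb hab
        have ha := hasmem a haa
        have hb := hasmem b hbb
        refine ⟨fun h => ?_, fun h => ?_, fun h => ?_, fun h => ?_⟩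
        · exact hcommon a ha b hb hab (fu a) (hfu a ha) (by rw [h]; exact hfu b hb)
        · exact hcommon a ha b hb hab (fu a) (hfu a ha) (by rw [h]; exact hfv b hb)
        · exact hcommon a ha b hb hab (fv a) (hfv a ha) (by rw [h]; exact hfu b hb)
        · exact hcommon a ha b hb hab (fv a) (hfv a ha) (by rw [h]; exact hfv b hb)
    set rest := (K \ Bl.toFinset).toList with hrest
    have hrestmem : ∀ z ∈ rest, z ∈ K ∧ z ∉ Bl := by
      intro z hz
      rw [hrest, Finset.mem_toList, Finset.mem_sdiff] at hz
      exact ⟨hz.1, fun hzB => hz.2 (List.mem_toFinset.2 hzB)⟩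
    have hLnd : (Bl ++ rest).Nodup :=
      hBnd.append (Finset.nodup_toList _) (fun z hz hz2 => (hrestmem z hz2).2 hz)
    have hblk : ∀ a ∈ as, G.Adj a (fu a) ∧ G.Adj a (fv a) ∧ fu a ∈ (↑K : Set V) ∧
        fv a ∈ (↑K : Set V) := by
      intro a haa
      have ha := hasmem a haa
      exact ⟨hfu a ha, hfv a ha, by exact_mod_cast hInK a ha _ (hfu a ha),
        by exact_mod_cast hInK a ha _ (hfv a ha)⟩
    have hrK : ∀ z ∈ rest, z ∈ (↑K : Set V) := fun z hz => by
      exact_mod_cast (hrestmem z hz).1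
    have hrchain := HamAux.chain'_of_clique hcliq rest (Finset.nodup_toList _) hrK
    obtain ⟨hCh, hHead, hLast⟩ :=
      HamAux.blocks_chain hcliq fu fv as rest hblk hrK hrchain hLnd
    have hmemL : ∀ z : V, z ∈ Bl ++ rest := by
      intro z
      rcases hKI z with hzK | hzI
      · by_cases hzB : z ∈ Bl
        · exact List.mem_append_left _ hzB
        · refine List.mem_append_right _ ?_
          rw [hrest, Finset.mem_toList, Finset.mem_sdiff]
          exact ⟨hzK, fun h => hzB (List.mem_toFinset.1 h)⟩
      · refine List.mem_append_left _ ?_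
        rw [hBl, List.mem_flatMap]
        exact ⟨z, by rw [has, Finset.mem_toList]; exact hzI, by simp⟩
    have hlen := HamAux.length_eq_card hLnd hmemL
    have hlen3 : 3 ≤ (Bl ++ rest).length := by omega
    have hLne : Bl ++ rest ≠ [] := by
      intro h
      rw [h] at hlen3
      simp at hlen3
    refine HamAux.isHamiltonianGraph_of_list (Bl ++ rest) hLnd hlen3 hCh hLne ?_ hmemL
    have hh : (Bl ++ rest).head hLne ∈ (↑K : Set V) := hHead _ (List.head?_eq_head hLne)
    have hl : (Bl ++ rest).getLast hLne ∈ (↑K : Set V) :=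
      hLast _ (List.getLast?_eq_getLast_of_ne_nil hLne)
    exact hcliq hl hh (Ne.symm (HamAux.head_ne_getLast _ hLnd (by omega) hLne))
  case pos =>
    obtain ⟨x, hx, y, hy, hxy, u, hxu, hyu⟩ := hov
    have huK : u ∈ K := hInK x hx u hxu
    have hU : ∀ w ∈ K, G.Adj x w ∨ G.Adj y w := hunionN x y hx hy hxy u hxu hyu
    have hthird : ∀ c ∈ I, c ≠ x → c ≠ y →
        (∀ w ∈ K, G.Adj x w ∨ G.Adj c w) ∧ (∀ w ∈ K, G.Adj y w ∨ G.Adj c w) := by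
      intro c hc hcx hcy
      obtain ⟨v1, v2, hv12, hcv1, hcv2⟩ := hdeg2 c hc
      have hv1K := hInK c hc v1 hcv1
      rcases hU v1 hv1K with h | h
      · have Uxc := hunionN x c hx hc (Ne.symm hcx) v1 h hcv1
        obtain ⟨w0, hw0K, hw0⟩ := hnonadj x hx
        have hcw0 : G.Adj c w0 := (Uxc w0 hw0K).resolve_left hw0
        have hyw0 : G.Adj y w0 := (hU w0 hw0K).resolve_left hw0
        exact ⟨Uxc, hunionN y c hy hc (Ne.symm hcy) w0 hyw0 hcw0⟩
      · have Uyc := hunionN y c hy hc (Ne.symm hcy) v1 h hcv1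
        obtain ⟨w0, hw0K, hw0⟩ := hnonadj y hy
        have hcw0 : G.Adj c w0 := (Uyc w0 hw0K).resolve_left hw0
        have hxw0 : G.Adj x w0 := (hU w0 hw0K).resolve_right hw0
        exact ⟨hunionN x c hx hc (Ne.symm hcx) w0 hxw0 hcw0, Uyc⟩
    have hxyI : ({x, y} : Finset V) ⊆ I := by
      intro t ht
      simp only [Finset.mem_insert, Finset.mem_singleton] at ht
      rcases ht with rfl | rfl <;> assumption
    have hxycard : ({x, y} : Finset V).card = 2 := by
      rw [Finset.card_insert_of_notMem (by simp [hxy]), Finset.card_singleton]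
    have hIcard3 : I.card ≤ 3 := by
      by_contra hgt
      push_neg at hgt
      have hsd : (I \ {x, y}).card = I.card - 2 := by
        rw [Finset.card_sdiff_of_subset hxyI, hxycard]
      have h2 : 1 < (I \ {x, y}).card := by omega
      obtain ⟨c, hc', d, hd', hcd⟩ := Finset.one_lt_card.1 h2
      rw [Finset.mem_sdiff] at hc' hd'
      obtain ⟨hc, hcxy⟩ := hc'
      obtain ⟨hd, hdxy⟩ := hd'
      simp only [Finset.mem_insert, Finset.mem_singleton, not_or] at hcxy hdxy
      obtain ⟨Uxc, Uyc⟩ := hthird c hc hcxy.1 hcxy.2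
      obtain ⟨v1, v2, hv12, hdv1, hdv2⟩ := hdeg2 d hd
      have hv1K := hInK d hd v1 hdv1
      rcases hU v1 hv1K with h | h
      · rcases Uyc v1 hv1K with h' | h'
        · exact claw1 v1 x y d hx hy hd hxy (Ne.symm hdxy.1) (Ne.symm hdxy.2)
            h.symm h'.symm hdv1.symm
        · exact claw1 v1 x c d hx hc hd (Ne.symm hcxy.1) (Ne.symm hdxy.1) hcd
            h.symm h'.symm hdv1.symm
      · rcases Uxc v1 hv1K with h' | h'
        · exact claw1 v1 x y d hx hy hd hxy (Ne.symm hdxy.1) (Ne.symm hdxy.2)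
            h'.symm h.symm hdv1.symm
        · exact claw1 v1 y c d hy hc hd (Ne.symm hcxy.2) (Ne.symm hdxy.2) hcd
            h.symm h'.symm hdv1.symm
    have hIcard2 : 2 ≤ I.card := hxycard ▸ Finset.card_le_card hxyI
    rcases (by omega : I.card = 2 ∨ I.card = 3) with hI2 | hI3
    · -- |I| = 2
      have hIeq : I = ({x, y} : Finset V) :=
        (Finset.eq_of_subset_of_card_le hxyI (by omega)).symm
      obtain ⟨w, hwK, hwnx⟩ := hnonadj x hx
      have hyw : G.Adj y w := (hU w hwK).resolve_left hwnx
      obtain ⟨w', hw'K, hw'ny⟩ := hnonadj y hy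
      have hxw' : G.Adj x w' := (hU w' hw'K).resolve_right hw'ny
      have hwu : w ≠ u := fun h => hwnx (by rw [h]; exact hxu)
      have hw'u : w' ≠ u := fun h => hw'ny (by rw [h]; exact hyu)
      have hww' : w ≠ w' := fun h => hwnx (by rw [h]; exact hxw')
      have hxK : x ∉ K := hIK x hx
      have hyK : y ∉ K := hIK y hy
      set mid := (K \ {u, w, w'}).toList with hmid
      have hmidmem : ∀ z ∈ mid, z ∈ K ∧ z ≠ u ∧ z ≠ w ∧ z ≠ w' := by
        intro z hz
        rw [hmid, Finset.mem_toList, Finset.mem_sdiff] at hz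
        simp only [Finset.mem_insert, Finset.mem_singleton, not_or] at hz
        exact ⟨hz.1, hz.2.1, hz.2.2.1, hz.2.2.2⟩
      have hmidnd : mid.Nodup := Finset.nodup_toList _
      set L := x :: u :: y :: w :: (mid ++ [w']) with hL
      have hmw' : (mid ++ [w']).Nodup := by
        refine hmidnd.append (List.nodup_singleton _) (fun z hz hz2 => ?_)
        simp only [List.mem_singleton] at hz2
        exact (hmidmem z hz).2.2.2 hz2
      have hwnot : w ∉ mid ++ [w'] := by
        intro h
        rcases List.mem_append.1 h with h | h
        · exact (hmidmem w h).2.2.1 rfl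
        · simp only [List.mem_singleton] at h
          exact hww' h
      have hynot : y ∉ w :: (mid ++ [w']) := by
        intro h
        rcases List.mem_cons.1 h with h | h
        · exact hyK (h ▸ hwK)
        rcases List.mem_append.1 h with h | h
        · exact hyK ((hmidmem y h).1)
        · simp only [List.mem_singleton] at h
          exact hyK (h ▸ hw'K)
      have hunot : u ∉ y :: w :: (mid ++ [w']) := by
        intro h
        rcases List.mem_cons.1 h with h | h
        · exact hyK (h ▸ huK)
        rcases List.mem_cons.1 h with h | h
        · exact hwu h.symm
        rcases List.mem_append.1 h with h | h
        · exact (hmidmem u h).2.1 rfl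
        · simp only [List.mem_singleton] at h
          exact hw'u h.symm
      have hxnot : x ∉ u :: y :: w :: (mid ++ [w']) := by
        intro h
        rcases List.mem_cons.1 h with h | h
        · exact hxK (h ▸ huK)
        rcases List.mem_cons.1 h with h | h
        · exact hxy h
        rcases List.mem_cons.1 h with h | h
        · exact hxK (h ▸ hwK)
        rcases List.mem_append.1 h with h | h
        · exact hxK ((hmidmem x h).1)
        · simp only [List.mem_singleton] at h
          exact hxK (h ▸ hw'K)
      have hLnd : L.Nodup := by
        rw [hL]
        exact List.nodup_cons.2 ⟨hxnot, List.nodup_cons.2 ⟨hunot,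
          List.nodup_cons.2 ⟨hynot, List.nodup_cons.2 ⟨hwnot, hmw'⟩⟩⟩⟩
      have hCh : L.Chain' G.Adj := by
        rw [hL, List.Chain', List.isChain_cons_cons, List.isChain_cons_cons, List.isChain_cons_cons]
        refine ⟨hxu, hyu.symm, hyw, ?_⟩
        rw [List.isChain_cons]
        constructor
        · intro z hz
          have hzmem : z ∈ mid ++ [w'] := List.mem_of_mem_head? hz
          have hzK : z ∈ K := by
            rcases List.mem_append.1 hzmem with h | h
            · exact (hmidmem z h).1
            · simp only [List.mem_singleton] at h
              exact h ▸ hw'K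
          have hwz : w ≠ z := fun h => hwnot (h ▸ hzmem)
          exact hcliq (by exact_mod_cast hwK) (by exact_mod_cast hzK) hwz
        · refine HamAux.chain'_append'
            (HamAux.chain'_of_clique hcliq mid hmidnd
              (fun z hz => by exact_mod_cast (hmidmem z hz).1))
            (List.isChain_singleton _) (fun hne1 hne2 => ?_)
          have hgm : mid.getLast hne1 ∈ mid := List.getLast_mem hne1
          have h1 : mid.getLast hne1 ∈ K := (hmidmem _ hgm).1
          have h2 : mid.getLast hne1 ≠ w' := (hmidmem _ hgm).2.2.2
          simpa using hcliq (by exact_mod_cast h1) (by exact_mod_cast hw'K) h2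
      have hmemL : ∀ z : V, z ∈ L := by
        intro z
        rcases hKI z with hzK | hzI
        · rcases eq_or_ne z u with rfl | h1
          · simp [hL]
          rcases eq_or_ne z w with rfl | h2
          · simp [hL]
          rcases eq_or_ne z w' with rfl | h3
          · simp [hL]
          have : z ∈ mid := by
            rw [hmid, Finset.mem_toList, Finset.mem_sdiff]
            simp [hzK, h1, h2, h3]
          simp [hL, this]
        · rw [hIeq] at hzI
          simp only [Finset.mem_insert, Finset.mem_singleton] at hzI
          rcases hzI with rfl | rfl <;> simp [hL]
      have hlen := HamAux.length_eq_card hLnd hmemL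
      have hlen3 : 3 ≤ L.length := by omega
      have hLne : L ≠ [] := by rw [hL]; simp
      refine HamAux.isHamiltonianGraph_of_list L hLnd hlen3 hCh hLne ?_ hmemL
      have hgl : L.getLast hLne = w' := by
        have t1 := List.getLast_append_right (l := x :: u :: y :: w :: mid) (l' := [w']) (by simp)
        simp only [List.cons_append] at t1
        exact t1.trans rfl
      have hhd : L.head hLne = x := rfl
      rw [hgl, hhd]
      exact hxw'.symm
    · -- |I| = 3
      have hsd1 : (I \ {x, y}).card = 1 := by
        rw [Finset.card_sdiff_of_subset hxyI, hxycard]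
        omega
      obtain ⟨c, hceq⟩ := Finset.card_eq_one.1 hsd1
      have hcmem : c ∈ I \ {x, y} := hceq ▸ Finset.mem_singleton_self c
      rw [Finset.mem_sdiff] at hcmem
      obtain ⟨hc, hcxy⟩ := hcmem
      simp only [Finset.mem_insert, Finset.mem_singleton, not_or] at hcxy
      obtain ⟨hcx, hcy⟩ := hcxy
      obtain ⟨Uxc, Uyc⟩ := hthird c hc hcx hcy
      have hIeq : I = ({x, y, c} : Finset V) := by
        refine (Finset.eq_of_subset_of_card_le ?_ ?_).symm
        · intro t ht
          simp only [Finset.mem_insert, Finset.mem_singleton] at ht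
          rcases ht with rfl | rfl | rfl <;> assumption
        · rw [Finset.card_insert_of_notMem (by simp [hxy, Ne.symm hcx]),
            Finset.card_insert_of_notMem (by simp [Ne.symm hcy]), Finset.card_singleton]
          omega
      set AB := K.filter (fun z => G.Adj x z ∧ G.Adj y z) with hAB
      set BC := K.filter (fun z => G.Adj y z ∧ G.Adj c z) with hBC
      set CA := K.filter (fun z => G.Adj c z ∧ G.Adj x z) with hCA
      have hABmem : ∀ z : V, z ∈ AB ↔ z ∈ K ∧ G.Adj x z ∧ G.Adj y z := by
        intro z; rw [hAB, Finset.mem_filter]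
      have hBCmem : ∀ z : V, z ∈ BC ↔ z ∈ K ∧ G.Adj y z ∧ G.Adj c z := by
        intro z; rw [hBC, Finset.mem_filter]
      have hCAmem : ∀ z : V, z ∈ CA ↔ z ∈ K ∧ G.Adj c z ∧ G.Adj x z := by
        intro z; rw [hCA, Finset.mem_filter]
      have hnotall : ∀ z : V, G.Adj x z → G.Adj y z → G.Adj c z → False := fun z h1 h2 h3 =>
        claw1 z x y c hx hy hc hxy (Ne.symm hcx) (Ne.symm hcy) h1.symm h2.symm h3.symm
      have hABne : AB.Nonempty := by
        obtain ⟨w0, hw0K, hw0⟩ := hnonadj c hc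
        exact ⟨w0, (hABmem w0).2 ⟨hw0K, (Uxc w0 hw0K).resolve_right hw0,
          (Uyc w0 hw0K).resolve_right hw0⟩⟩
      have hBCne : BC.Nonempty := by
        obtain ⟨w1, hw1K, hw1⟩ := hnonadj x hx
        exact ⟨w1, (hBCmem w1).2 ⟨hw1K, (hU w1 hw1K).resolve_left hw1,
          (Uxc w1 hw1K).resolve_left hw1⟩⟩
      have hCAne : CA.Nonempty := by
        obtain ⟨w2, hw2K, hw2⟩ := hnonadj y hy
        exact ⟨w2, (hCAmem w2).2 ⟨hw2K, (Uyc w2 hw2K).resolve_left hw2,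
          (hU w2 hw2K).resolve_right hw2⟩⟩
      have hcover : ∀ z ∈ K, z ∈ AB ∨ z ∈ BC ∨ z ∈ CA := by
        intro z hzK
        rcases hU z hzK with h | h
        · rcases Uyc z hzK with h' | h'
          · exact Or.inl ((hABmem z).2 ⟨hzK, h, h'⟩)
          · exact Or.inr (Or.inr ((hCAmem z).2 ⟨hzK, h', h⟩))
        · rcases Uxc z hzK with h' | h'
          · exact Or.inl ((hABmem z).2 ⟨hzK, h', h⟩)
          · exact Or.inr (Or.inl ((hBCmem z).2 ⟨hzK, h, h'⟩))
      set ABl := AB.toList with hABl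
      set BCl := BC.toList with hBCl
      set CAl := CA.toList with hCAl
      have hABlne : ABl ≠ [] := fun h =>
        Finset.nonempty_iff_ne_empty.1 hABne (by rwa [← Finset.toList_eq_nil])
      have hBClne : BCl ≠ [] := fun h =>
        Finset.nonempty_iff_ne_empty.1 hBCne (by rwa [← Finset.toList_eq_nil])
      have hCAlne : CAl ≠ [] := fun h =>
        Finset.nonempty_iff_ne_empty.1 hCAne (by rwa [← Finset.toList_eq_nil])
      have hABlm : ∀ z ∈ ABl, z ∈ K ∧ G.Adj x z ∧ G.Adj y z := fun z hz =>
        (hABmem z).1 (by rwa [hABl, Finset.mem_toList] at hz)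
      have hBClm : ∀ z ∈ BCl, z ∈ K ∧ G.Adj y z ∧ G.Adj c z := fun z hz =>
        (hBCmem z).1 (by rwa [hBCl, Finset.mem_toList] at hz)
      have hCAlm : ∀ z ∈ CAl, z ∈ K ∧ G.Adj c z ∧ G.Adj x z := fun z hz =>
        (hCAmem z).1 (by rwa [hCAl, Finset.mem_toList] at hz)
      have hxK : x ∉ K := hIK x hx
      have hyK : y ∉ K := hIK y hy
      have hcK : c ∉ K := hIK c hc
      set L := x :: (ABl ++ (y :: (BCl ++ (c :: CAl)))) with hL
      -- Nodup
      have h5 : (c :: CAl).Nodup := List.nodup_cons.2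
        ⟨fun h => hcK ((hCAlm c h).1), Finset.nodup_toList _⟩
      have h4 : (BCl ++ (c :: CAl)).Nodup := by
        refine (Finset.nodup_toList _).append h5 (fun z hz hz2 => ?_)
        rcases List.mem_cons.1 hz2 with rfl | hz3
        · exact hcK ((hBClm z hz).1)
        · exact hnotall z ((hCAlm z hz3).2.2) ((hBClm z hz).2.1) ((hBClm z hz).2.2)
      have h3 : (y :: (BCl ++ (c :: CAl))).Nodup := by
        refine List.nodup_cons.2 ⟨?_, h4⟩
        intro h
        rcases List.mem_append.1 h with h' | h'
        · exact hyK ((hBClm y h').1)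
        · rcases List.mem_cons.1 h' with h'' | h''
          · exact hcy h''.symm
          · exact hyK ((hCAlm y h'').1)
      have h2 : (ABl ++ (y :: (BCl ++ (c :: CAl)))).Nodup := by
        refine (Finset.nodup_toList _).append h3 (fun z hz hz2 => ?_)
        rcases List.mem_cons.1 hz2 with rfl | hz3
        · exact hyK ((hABlm z hz).1)
        rcases List.mem_append.1 hz3 with h' | h'
        · exact hnotall z ((hABlm z hz).2.1) ((hABlm z hz).2.2) ((hBClm z h').2.2)
        rcases List.mem_cons.1 h' with rfl | h''
        · exact hcK ((hABlm z hz).1)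
        · exact hnotall z ((hABlm z hz).2.1) ((hABlm z hz).2.2) ((hCAlm z h'').2.1)
      have hLnd : L.Nodup := by
        rw [hL]
        refine List.nodup_cons.2 ⟨?_, h2⟩
        intro h
        rcases List.mem_append.1 h with h' | h'
        · exact hxK ((hABlm x h').1)
        rcases List.mem_cons.1 h' with h'' | h''
        · exact hxy h''
        rcases List.mem_append.1 h'' with h3' | h3'
        · exact hxK ((hBClm x h3').1)
        rcases List.mem_cons.1 h3' with h4' | h4'
        · exact hcx h4'.symm
        · exact hxK ((hCAlm x h4').1)
      -- Chain
      have hchAB := HamAux.chain'_of_clique hcliq ABl (Finset.nodup_toList _)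
        (fun z hz => by exact_mod_cast (hABlm z hz).1)
      have hchBC := HamAux.chain'_of_clique hcliq BCl (Finset.nodup_toList _)
        (fun z hz => by exact_mod_cast (hBClm z hz).1)
      have hchCA := HamAux.chain'_of_clique hcliq CAl (Finset.nodup_toList _)
        (fun z hz => by exact_mod_cast (hCAlm z hz).1)
      have hCh : L.Chain' G.Adj := by
        rw [hL, List.Chain', List.isChain_cons]
        constructor
        · intro z hz
          rw [List.head?_append_of_ne_nil _ hABlne] at hz
          have hzm : z ∈ ABl := List.mem_of_mem_head? hz
          exact ((hABlm z hzm).2.1)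
        refine HamAux.chain'_append' hchAB ?_ (fun hne1 hne2 => ?_)
        · rw [List.Chain', List.isChain_cons]
          constructor
          · intro z hz
            rw [List.head?_append_of_ne_nil _ hBClne] at hz
            exact ((hBClm z (List.mem_of_mem_head? hz)).2.1)
          refine HamAux.chain'_append' hchBC ?_ (fun hne1 hne2 => ?_)
          · rw [List.Chain', List.isChain_cons]
            constructor
            · intro z hz
              exact ((hCAlm z (List.mem_of_mem_head? hz)).2.1)
            · exact hchCA
          · have hgm := List.getLast_mem hne1
            simp only [List.head_cons]
            exact ((hBClm _ hgm).2.2).symm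
        · have hgm := List.getLast_mem hne1
          have : (y :: (BCl ++ (c :: CAl))).head hne2 = y := rfl
          rw [this]
          exact ((hABlm _ hgm).2.2).symm
      have hmemL : ∀ z : V, z ∈ L := by
        intro z
        rcases hKI z with hzK | hzI
        · rcases hcover z hzK with h | h | h
          · have : z ∈ ABl := by rwa [hABl, Finset.mem_toList]
            simp [hL, this]
          · have : z ∈ BCl := by rwa [hBCl, Finset.mem_toList]
            simp [hL, this]
          · have : z ∈ CAl := by rwa [hCAl, Finset.mem_toList]
            simp [hL, this]
        · rw [hIeq] at hzI
          simp only [Finset.mem_insert, Finset.mem_singleton] at hzI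
          rcases hzI with rfl | rfl | rfl <;> simp [hL]
      have hlen := HamAux.length_eq_card hLnd hmemL
      have hlen3 : 3 ≤ L.length := by omega
      have hLne : L ≠ [] := by rw [hL]; simp
      refine HamAux.isHamiltonianGraph_of_list L hLnd hlen3 hCh hLne ?_ hmemL
      have hgl : L.getLast hLne = CAl.getLast hCAlne := by
        have t1 := List.getLast_append_right (l := x :: ABl) (l' := y :: (BCl ++ (c :: CAl))) (by simp)
        simp only [List.cons_append] at t1
        have t2 := List.getLast_append_right (l := y :: BCl) (l' := c :: CAl) (by simp)
        simp only [List.cons_append] at t2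
        have t3 : (c :: CAl).getLast (by simp) = CAl.getLast hCAlne :=
          List.getLast_cons hCAlne
        exact t1.trans (t2.trans t3)
      have hhd : L.head hLne = x := rfl
      rw [hgl, hhd]
      have hgm := List.getLast_mem hCAlne
      exact ((hCAlm _ hgm).2.2).symm

/-- A claw-free split graph of type `(K, I)` is Hamiltonian if and
only if it is 2-connected. -/
theorem hamiltonian_iff_two_connected_of_clawFree_split
    {V : Type*} [Fintype V] [DecidableEq V] (G : SimpleGraph V) (K I : Finset V)
    (hsplit : IsSplitType G K I) (hclaw : K1rFree G 3) :
    IsHamiltonianGraph G ↔ KConnected G 2 := by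
  constructor
  · intro h
    exact HamAux.two_connected_of_hamiltonian h
  · intro hconn
    obtain ⟨⟨hunion, hdisj, hcliq, hind⟩, hmax⟩ := hsplit
    exact ham_of_conn_aux G K I hunion hdisj hcliq hind hmax hclaw hconn.1 hconn.2
end

section
/- Let G be a connected finite simple graph and u, v, w three distinct vertices of G such that uw is not an edge of G and vw is an edge of G. Let x be the Perron vector of G. If x_u ≥ x_v, then ρ(G − vw + uw) > ρ(G). -/
open SimpleGraph

section SpecAux
open Matrix Module.End


variable {V : Type*} [Fintype V] [DecidableEq V]

lemma hasEigenvalue_euclid_iff (A : Matrix V V ℝ) (μ : ℝ) :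
    Module.End.HasEigenvalue (Matrix.toEuclideanLin A) μ ↔
      Module.End.HasEigenvalue A.mulVecLin μ := by
  constructor <;> intro h <;> obtain ⟨z, hz⟩ := h.exists_hasEigenvector
  · refine hasEigenvalue_of_hasEigenvector (x := WithLp.equiv 2 (V → ℝ) z) ⟨?_, ?_⟩
    · rw [Module.End.mem_eigenspace_iff]
      have h1 := hz.apply_eq_smul
      rw [Matrix.toEuclideanLin_apply] at h1
      have := congrArg (WithLp.equiv 2 (V → ℝ)) h1
      simpa [Matrix.mulVecLin_apply, WithLp.ofLp_smul] using this
    · simpa [WithLp.ofLp_zero] using hz.right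
  · refine hasEigenvalue_of_hasEigenvector (x := (WithLp.equiv 2 (V → ℝ)).symm z) ⟨?_, ?_⟩
    · rw [Module.End.mem_eigenspace_iff]
      have h1 := hz.apply_eq_smul
      rw [WithLp.equiv_symm_apply, Matrix.toEuclideanLin_apply_piLp_toLp]
      rw [show A *ᵥ z = μ • z from h1, WithLp.toLp_smul]
    · simpa [WithLp.toLp_zero] using hz.right

noncomputable def Tcl (A : Matrix V V ℝ) : EuclideanSpace ℝ V →L[ℝ] EuclideanSpace ℝ V :=
  LinearMap.toContinuousLinearMap (Matrix.toEuclideanLin A)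

lemma Tcl_apply (A : Matrix V V ℝ) (y : EuclideanSpace ℝ V) :
    Tcl A y = Matrix.toEuclideanLin A y := rfl

lemma eigen_bddAbove (A : Matrix V V ℝ) :
    BddAbove {μ : ℝ | Module.End.HasEigenvalue A.mulVecLin μ} := by
  refine ⟨‖Tcl A‖, ?_⟩
  rintro μ hμ
  simp only [Set.mem_setOf_eq, ← hasEigenvalue_euclid_iff] at hμ
  obtain ⟨z, hz⟩ := hμ.exists_hasEigenvector
  have h1 : Tcl A z = μ • z := hz.apply_eq_smul
  have h2 : ‖Tcl A z‖ ≤ ‖Tcl A‖ * ‖z‖ := (Tcl A).le_opNorm z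
  rw [h1, norm_smul, Real.norm_eq_abs] at h2
  have hz0 : 0 < ‖z‖ := norm_pos_iff.2 hz.right
  have h3 : |μ| ≤ ‖Tcl A‖ := le_of_mul_le_mul_right (by linarith) hz0
  exact le_trans (le_abs_self μ) h3


open scoped RealInnerProductSpace in
lemma rayleigh_le_specRad [Nonempty V] (A : Matrix V V ℝ) (hA : A.IsHermitian)
    (y : EuclideanSpace ℝ V) (hy : y ≠ 0) :
    ⟪Matrix.toEuclideanLin A y, y⟫ / ‖y‖ ^ 2 ≤ specRad A := by
  have hbdd : BddAbove (Set.range fun z : {z : EuclideanSpace ℝ V // z ≠ 0} =>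
      ⟪Matrix.toEuclideanLin A z, (z : EuclideanSpace ℝ V)⟫ / ‖(z : EuclideanSpace ℝ V)‖ ^ 2) := by
    refine ⟨‖Tcl A‖, ?_⟩
    rintro r ⟨z, rfl⟩
    have hz0 : (0:ℝ) < ‖(z : EuclideanSpace ℝ V)‖ := norm_pos_iff.2 z.prop
    have h1 : ⟪Matrix.toEuclideanLin A z, (z : EuclideanSpace ℝ V)⟫ ≤ ‖Tcl A‖ * ‖(z:EuclideanSpace ℝ V)‖ ^ 2 := by
      calc ⟪Matrix.toEuclideanLin A z, (z : EuclideanSpace ℝ V)⟫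
          ≤ ‖Matrix.toEuclideanLin A z‖ * ‖(z:EuclideanSpace ℝ V)‖ := real_inner_le_norm _ _
        _ ≤ (‖Tcl A‖ * ‖(z:EuclideanSpace ℝ V)‖) * ‖(z:EuclideanSpace ℝ V)‖ := by
            have := (Tcl A).le_opNorm z
            rw [Tcl_apply] at this
            exact mul_le_mul_of_nonneg_right this (norm_nonneg _)
        _ = ‖Tcl A‖ * ‖(z:EuclideanSpace ℝ V)‖ ^ 2 := by ring
    rw [div_le_iff₀ (by positivity)]
    exact h1
  have hnt : Nontrivial (EuclideanSpace ℝ V) := inferInstance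
  have heig := LinearMap.IsSymmetric.hasEigenvalue_iSup_of_finiteDimensional
    (Matrix.isHermitian_iff_isSymmetric.1 hA)
  have hle : (⨆ z : {z : EuclideanSpace ℝ V // z ≠ 0},
      ⟪Matrix.toEuclideanLin A z, (z : EuclideanSpace ℝ V)⟫ / ‖(z : EuclideanSpace ℝ V)‖ ^ 2)
      ≤ specRad A := by
    apply le_csSup (eigen_bddAbove A)
    rw [Set.mem_setOf_eq, ← hasEigenvalue_euclid_iff]
    simpa using heig
  refine le_trans ?_ hle
  exact le_ciSup hbdd (⟨y, hy⟩ : {z : EuclideanSpace ℝ V // z ≠ 0})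


open scoped RealInnerProductSpace in
lemma toEuclideanLin_eq_smul_of_rayleigh_eq [Nonempty V] (A : Matrix V V ℝ) (hA : A.IsHermitian)
    (y : EuclideanSpace ℝ V) (hy : y ≠ 0)
    (heq : ⟪Matrix.toEuclideanLin A y, y⟫ / ‖y‖ ^ 2 = specRad A) :
    Matrix.toEuclideanLin A y = specRad A • y := by
  set s : ℝ := ⨆ z : {z : EuclideanSpace ℝ V // z ≠ 0},
      ⟪Matrix.toEuclideanLin A z, (z : EuclideanSpace ℝ V)⟫ / ‖(z : EuclideanSpace ℝ V)‖ ^ 2 with hs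
  have hbdd : BddAbove (Set.range fun z : {z : EuclideanSpace ℝ V // z ≠ 0} =>
      ⟪Matrix.toEuclideanLin A z, (z : EuclideanSpace ℝ V)⟫ / ‖(z : EuclideanSpace ℝ V)‖ ^ 2) := by
    refine ⟨‖Tcl A‖, ?_⟩
    rintro r ⟨z, rfl⟩
    have hz0 : (0:ℝ) < ‖(z : EuclideanSpace ℝ V)‖ := norm_pos_iff.2 z.prop
    rw [div_le_iff₀ (by positivity)]
    calc ⟪Matrix.toEuclideanLin A z, (z : EuclideanSpace ℝ V)⟫
        ≤ ‖Matrix.toEuclideanLin A z‖ * ‖(z:EuclideanSpace ℝ V)‖ := real_inner_le_norm _ _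
      _ ≤ (‖Tcl A‖ * ‖(z:EuclideanSpace ℝ V)‖) * ‖(z:EuclideanSpace ℝ V)‖ := by
          have := (Tcl A).le_opNorm z
          rw [Tcl_apply] at this
          exact mul_le_mul_of_nonneg_right this (norm_nonneg _)
      _ = ‖Tcl A‖ * ‖(z:EuclideanSpace ℝ V)‖ ^ 2 := by ring
  have heig := LinearMap.IsSymmetric.hasEigenvalue_iSup_of_finiteDimensional
    (Matrix.isHermitian_iff_isSymmetric.1 hA)
  have hle : s ≤ specRad A := by
    apply le_csSup (eigen_bddAbove A)
    rw [Set.mem_setOf_eq, ← hasEigenvalue_euclid_iff]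
    simpa [hs] using heig
  have hys : ⟪Matrix.toEuclideanLin A y, y⟫ / ‖y‖ ^ 2 ≤ s :=
    le_ciSup hbdd (⟨y, hy⟩ : {z : EuclideanSpace ℝ V // z ≠ 0})
  have hsy : ⟪Matrix.toEuclideanLin A y, y⟫ / ‖y‖ ^ 2 = s :=
    le_antisymm hys (by rw [heq] at hys ⊢; exact hle)
  have hsspec : s = specRad A := by rw [← hsy, heq]
  have hy0 : (0:ℝ) < ‖y‖ := norm_pos_iff.2 hy
  have hmax : IsMaxOn (Tcl A).reApplyInnerSelf (Metric.sphere (0 : EuclideanSpace ℝ V) ‖y‖) y := by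
    intro z hz
    have hzn : ‖z‖ = ‖y‖ := by simpa using hz
    have hz0 : z ≠ 0 := by
      intro h; rw [h, norm_zero] at hzn; exact absurd hzn.symm (ne_of_gt hy0)
    have h1 : ⟪Matrix.toEuclideanLin A z, z⟫ / ‖z‖ ^ 2 ≤ s :=
      le_ciSup hbdd (⟨z, hz0⟩ : {z : EuclideanSpace ℝ V // z ≠ 0})
    rw [div_le_iff₀ (pow_pos (norm_pos_iff.2 hz0) 2)] at h1
    have h3 : ⟪Matrix.toEuclideanLin A y, y⟫ = s * ‖y‖ ^ 2 := by
      rw [← hsy]; field_simp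
    simp only [ContinuousLinearMap.reApplyInnerSelf, Tcl_apply, RCLike.re_to_real, Set.mem_setOf_eq]
    rw [h3, ← hzn]
    exact h1
  have hsa : IsSelfAdjoint (Tcl A) := by
    rw [ContinuousLinearMap.isSelfAdjoint_iff_isSymmetric]
    have : ((Tcl A : EuclideanSpace ℝ V →L[ℝ] EuclideanSpace ℝ V) :
        EuclideanSpace ℝ V →ₗ[ℝ] EuclideanSpace ℝ V) = Matrix.toEuclideanLin A :=
      LinearMap.coe_toContinuousLinearMap _
    rw [this]
    exact Matrix.isHermitian_iff_isSymmetric.1 hA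
  have hEV := hsa.hasEigenvector_of_isMaxOn hy hmax
  have happ := hEV.apply_eq_smul
  have hco : (⨆ z : {z : EuclideanSpace ℝ V // z ≠ 0}, (Tcl A).rayleighQuotient z) = s := by
    rw [hs]
    rfl
  rw [hco, hsspec] at happ
  exact happ


end SpecAux

open scoped RealInnerProductSpace in
/-- rotating an edge `vw` to `uw` strictly increases the spectral
radius when the Perron vector satisfies `x_u ≥ x_v`. -/
theorem rho_lt_rho_rotate {V : Type*} [Fintype V] (G : SimpleGraph V)
    (hG : G.Connected) (u v w : V) (huv : u ≠ v) (huw : u ≠ w) (hvw : v ≠ w)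
    (hnadj : ¬ G.Adj u w) (hadj : G.Adj v w)
    (x : V → ℝ) (hx : IsPerronVector G x) (hxuv : x v ≤ x u) :
    rho G < rho ((G \ SimpleGraph.edge v w) ⊔ SimpleGraph.edge u w) := by
  classical
  have hne : Nonempty V := hG.nonempty
  obtain ⟨hpos, hnorm, heig⟩ := hx
  set ρ := rho G with hρ
  set G' := (G \ SimpleGraph.edge v w) ⊔ SimpleGraph.edge u w with hG'def
  have hadj' : ∀ i j : V, adjMat G' i j = adjMat G i j
      + (if i = u then (1:ℝ) else 0) * (if j = w then 1 else 0)
      + (if i = w then (1:ℝ) else 0) * (if j = u then 1 else 0)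
      - (if i = v then (1:ℝ) else 0) * (if j = w then 1 else 0)
      - (if i = w then (1:ℝ) else 0) * (if j = v then 1 else 0) := by
    intro i j
    simp only [adjMat, Matrix.of_apply, hG'def, SimpleGraph.sup_adj, SimpleGraph.sdiff_adj,
      SimpleGraph.edge_adj]
    by_cases hiu : i = u <;> by_cases hiv : i = v <;> by_cases hiw : i = w <;>
      by_cases hju : j = u <;> by_cases hjv : j = v <;> by_cases hjw : j = w <;>
      subst_vars <;>
      simp_all [SimpleGraph.adj_comm]
  have hAx : ∀ i, (adjMat G).mulVec x i = ρ * x i := by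
    intro i; rw [heig]; simp
  have hrow : ∀ i, (adjMat G').mulVec x i = ρ * x i
      + (if i = u then (1:ℝ) else 0) * x w + (if i = w then (1:ℝ) else 0) * x u
      - (if i = v then (1:ℝ) else 0) * x w - (if i = w then (1:ℝ) else 0) * x v := by
    intro i
    have h0 : (adjMat G').mulVec x i = ∑ j, adjMat G' i j * x j := rfl
    have h1 : (adjMat G).mulVec x i = ∑ j, adjMat G i j * x j := rfl
    rw [h0]
    have hsplit : ∀ j, adjMat G' i j * x j
        = adjMat G i j * x j
        + (if i = u then (1:ℝ) else 0) * (if j = w then x j else 0)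
        + (if i = w then (1:ℝ) else 0) * (if j = u then x j else 0)
        - (if i = v then (1:ℝ) else 0) * (if j = w then x j else 0)
        - (if i = w then (1:ℝ) else 0) * (if j = v then x j else 0) := by
      intro j
      rw [hadj' i j]
      by_cases hju : j = u <;> by_cases hjv : j = v <;> by_cases hjw : j = w <;>
        simp [hju, hjv, hjw, huv, huw, hvw, Ne.symm huv, Ne.symm huw, Ne.symm hvw, ite_mul, mul_ite,
          mul_one, mul_zero, one_mul, zero_mul] <;>
        (try ring) <;> (split_ifs <;> ring)
    calc ∑ j, adjMat G' i j * x j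
        = ∑ j, (adjMat G i j * x j
          + (if i = u then (1:ℝ) else 0) * (if j = w then x j else 0)
          + (if i = w then (1:ℝ) else 0) * (if j = u then x j else 0)
          - (if i = v then (1:ℝ) else 0) * (if j = w then x j else 0)
          - (if i = w then (1:ℝ) else 0) * (if j = v then x j else 0)) :=
          Finset.sum_congr rfl fun j _ => hsplit j
      _ = ρ * x i
          + (if i = u then (1:ℝ) else 0) * x w + (if i = w then (1:ℝ) else 0) * x u
          - (if i = v then (1:ℝ) else 0) * x w - (if i = w then (1:ℝ) else 0) * x v := by
          rw [Finset.sum_sub_distrib, Finset.sum_sub_distrib, Finset.sum_add_distrib,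
            Finset.sum_add_distrib, ← Finset.mul_sum, ← Finset.mul_sum, ← Finset.mul_sum,
            ← Finset.mul_sum, ← h1, hAx i,
            Finset.sum_ite_eq' Finset.univ w (fun j => x j),
            Finset.sum_ite_eq' Finset.univ u (fun j => x j),
            Finset.sum_ite_eq' Finset.univ v (fun j => x j)]
          simp
  have hquad : ∑ i, (adjMat G').mulVec x i * x i = ρ + 2 * x w * (x u - x v) := by
    have hsplit : ∀ i, (adjMat G').mulVec x i * x i
        = ρ * (x i * x i)
        + (if i = u then x w * x i else 0) + (if i = w then x u * x i else 0)
        - (if i = v then x w * x i else 0) - (if i = w then x v * x i else 0) := by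
      intro i
      rw [hrow i]
      by_cases hiu : i = u <;> by_cases hiv : i = v <;> by_cases hiw : i = w <;>
        simp [hiu, hiv, hiw, huv, huw, hvw, Ne.symm huv, Ne.symm huw, Ne.symm hvw, ite_mul, mul_ite,
          mul_one, mul_zero, one_mul, zero_mul] <;>
        (try ring) <;> (split_ifs <;> ring)
    calc ∑ i, (adjMat G').mulVec x i * x i
        = ∑ i, (ρ * (x i * x i)
          + (if i = u then x w * x i else 0) + (if i = w then x u * x i else 0)
          - (if i = v then x w * x i else 0) - (if i = w then x v * x i else 0)) :=
          Finset.sum_congr rfl fun i _ => hsplit i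
      _ = ρ + 2 * x w * (x u - x v) := by
          rw [Finset.sum_sub_distrib, Finset.sum_sub_distrib, Finset.sum_add_distrib,
            Finset.sum_add_distrib, ← Finset.mul_sum,
            Finset.sum_ite_eq' Finset.univ u (fun i => x w * x i),
            Finset.sum_ite_eq' Finset.univ w (fun i => x u * x i),
            Finset.sum_ite_eq' Finset.univ v (fun i => x w * x i),
            Finset.sum_ite_eq' Finset.univ w (fun i => x v * x i)]
          have : ∑ i, x i * x i = 1 := by
            rw [← hnorm]; exact Finset.sum_congr rfl fun i _ => by ring
          rw [this]
          simp
          ring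
  set y : EuclideanSpace ℝ V := (WithLp.equiv 2 (V → ℝ)).symm x with hydef
  have hyi : ∀ i, y i = x i := fun i => rfl
  have hy0 : y ≠ 0 := by
    intro h
    have h2 : y w = 0 := by rw [h]; rfl
    rw [hyi w] at h2
    exact (hpos w).ne' h2
  have hynorm : ‖y‖ ^ 2 = 1 := by
    rw [← real_inner_self_eq_norm_sq, PiLp.inner_apply]
    simp only [RCLike.inner_apply, conj_trivial, hyi]
    rw [← hnorm]
    exact Finset.sum_congr rfl fun i _ => by ring
  have hinner : ⟪Matrix.toEuclideanLin (adjMat G') y, y⟫ = ∑ i, (adjMat G').mulVec x i * x i := by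
    rw [hydef, WithLp.equiv_symm_apply, Matrix.toEuclideanLin_apply_piLp_toLp, PiLp.inner_apply]
    simp [RCLike.inner_apply, conj_trivial, PiLp.toLp_apply, mul_comm]
  have hherm : (adjMat G').IsHermitian := by
    apply Matrix.ext
    intro i j
    simp only [Matrix.conjTranspose_apply, adjMat, Matrix.of_apply, star_trivial]
    by_cases h : G'.Adj i j
    · rw [if_pos h.symm, if_pos h]
    · rw [if_neg (fun h' => h h'.symm), if_neg h]
  have hray := rayleigh_le_specRad (adjMat G') hherm y hy0
  rw [hynorm, div_one, hinner, hquad] at hray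
  have hδ : 0 ≤ 2 * x w * (x u - x v) :=
    mul_nonneg (mul_nonneg (by norm_num) (hpos w).le) (sub_nonneg.2 hxuv)
  by_contra hcon
  push_neg at hcon
  have hcon' : specRad (adjMat G') ≤ ρ := hcon
  have heq2 : ⟪Matrix.toEuclideanLin (adjMat G') y, y⟫ / ‖y‖ ^ 2 = specRad (adjMat G') := by
    rw [hynorm, div_one, hinner, hquad]
    linarith
  have hsm := toEuclideanLin_eq_smul_of_rayleigh_eq (adjMat G') hherm y hy0 heq2
  have hspec : specRad (adjMat G') = ρ := by linarith
  have hu := congrFun (congrArg (WithLp.equiv 2 (V → ℝ)) hsm) u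
  rw [hydef] at hu
  simp only [WithLp.equiv_symm_apply, WithLp.equiv_apply, WithLp.ofLp_toLp, Matrix.toEuclideanLin_apply_piLp_toLp, Equiv.apply_symm_apply,
    WithLp.ofLp_smul, Equiv.apply_symm_apply, Pi.smul_apply, smul_eq_mul] at hu
  rw [hrow u, hspec] at hu
  rw [if_pos rfl, if_neg huw, if_neg huv] at hu
  have hxw : x w = 0 := by linarith
  exact (hpos w).ne' hxw
end
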